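/- If β > 1, γ ≥ β, and βγ > 1, then (γ−1)/(β−1) ≥ (γ/β)^(√(βγ)/(√(βγ)−1)). -/
import Mathlib

theorem stmt_1 (β γ : ℝ) (hβ : 1 < β) (hle : β ≤ γ) (h1 : 1 < β * γ) :
    (γ / β) ^ (Real.sqrt (β * γ) / (Real.sqrt (β * γ) - 1)) ≤ (γ - 1) / (β - 1) := by
  have hγ : 1 < γ := lt_of_lt_of_le hβ hle
  have hβ0 : (0:ℝ) < β := by linarith
  have hγ0 : (0:ℝ) < γ := by linarith
  set m := Real.sqrt (β * γ) with hm
  have hm2 : m ^ 2 = β * γ := Real.sq_sqrt (by positivity)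
  have hm0 : 0 ≤ m := Real.sqrt_nonneg _
  have hm1 : 1 < m := by nlinarith
  have hmγ : m ≤ γ := by nlinarith
  have hγm2 : γ < m ^ 2 := by nlinarith
  set c := 2 * m / (m - 1) with hc
  set F : ℝ → ℝ := fun t => Real.log (t - 1) - Real.log (m ^ 2 / t - 1) - c * Real.log t
    with hF
  have hder : ∀ t ∈ Set.Icc m γ,
      HasDerivAt F (1/(t-1) - (m^2 * (-(t^2)⁻¹))/(m^2/t - 1) - c * t⁻¹) t := by
    intro t ht
    obtain ⟨ht1, ht2⟩ := ht
    have ht1' : 1 < t := lt_of_lt_of_le hm1 ht1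
    have ht0 : 0 < t := by linarith
    have htm2 : t < m^2 := lt_of_le_of_lt ht2 hγm2
    have hBpos : 0 < m^2/t - 1 := by
      rw [sub_pos, lt_div_iff₀ ht0, one_mul]; exact htm2
    have hA : HasDerivAt (fun t : ℝ => Real.log (t - 1)) (1/(t-1)) t := by
      have := ((hasDerivAt_id t).sub_const 1).log (by simp; intro h; linarith : t - 1 ≠ 0)
      simpa using this
    have hB : HasDerivAt (fun t : ℝ => Real.log (m^2/t - 1))
        ((m^2 * (-(t^2)⁻¹))/(m^2/t - 1)) t := by
      have hinv : HasDerivAt (fun t : ℝ => m^2 / t - 1) (m^2 * (-(t^2)⁻¹)) t := by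
        simpa [div_eq_mul_inv] using ((hasDerivAt_inv (ne_of_gt ht0)).const_mul (m^2)).sub_const 1
      exact hinv.log (ne_of_gt hBpos)
    have hC : HasDerivAt (fun t : ℝ => c * Real.log t) (c * t⁻¹) t :=
      (Real.hasDerivAt_log (ne_of_gt ht0)).const_mul c
    exact (hA.sub hB).sub hC
  have hderiv_nonneg : ∀ t ∈ Set.Icc m γ,
      0 ≤ 1/(t-1) - (m^2 * (-(t^2)⁻¹))/(m^2/t - 1) - c * t⁻¹ := by
    intro t ht
    obtain ⟨ht1, ht2⟩ := ht
    have ht1' : 1 < t := lt_of_lt_of_le hm1 ht1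
    have ht0 : 0 < t := by linarith
    have htm2 : t < m^2 := lt_of_le_of_lt ht2 hγm2
    have hkey : 1/(t-1) - (m^2 * (-(t^2)⁻¹))/(m^2/t - 1) - c * t⁻¹
        = ((m+1)*(t-m)^2) / (t*(t-1)*(m^2-t)*(m-1)) := by
      have e1 : t - 1 ≠ 0 := by intro h; linarith
      have e2 : m^2 - t ≠ 0 := by intro h; linarith
      have e3 : m - 1 ≠ 0 := by intro h; linarith
      have e4 : t ≠ 0 := ne_of_gt ht0
      have hrw1 : m^2/t - 1 = (m^2-t)/t := by field_simp
      rw [hrw1, hc]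
      field_simp
      ring
    rw [hkey]
    apply div_nonneg
    · nlinarith [sq_nonneg (t-m)]
    · have : 0 < t*(t-1)*(m^2-t)*(m-1) := by
        apply mul_pos; apply mul_pos; apply mul_pos <;> linarith
        all_goals linarith
      linarith
  have hmono : MonotoneOn F (Set.Icc m γ) := by
    apply monotoneOn_of_deriv_nonneg (convex_Icc m γ)
    · exact fun t ht => (hder t ht).continuousAt.continuousWithinAt
    · intro t ht
      rw [interior_Icc] at ht
      exact (hder t (Set.Ioo_subset_Icc_self ht)).differentiableAt.differentiableWithinAt
    · intro t ht
      rw [interior_Icc] at ht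
      rw [(hder t (Set.Ioo_subset_Icc_self ht)).deriv]
      exact hderiv_nonneg t (Set.Ioo_subset_Icc_self ht)
  have hkey : F m ≤ F γ :=
    hmono ⟨le_refl m, hmγ⟩ ⟨hmγ, le_refl γ⟩ hmγ
  have hm0' : (0:ℝ) < m := by linarith
  have hFm : F m = -(c * Real.log m) := by
    have hmm : m^2/m = m := by field_simp [sq]
    simp only [hF, hmm]
    ring
  have hβval : m^2/γ = β := by rw [hm2]; field_simp
  have hFγ : F γ = Real.log (γ-1) - Real.log (β-1) - c * Real.log γ := by
    simp only [hF, hβval]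
  rw [hFm, hFγ] at hkey
  have hlogβ : Real.log β = 2*Real.log m - Real.log γ := by
    rw [← hβval, Real.log_div (by positivity) (ne_of_gt hγ0)]
    rw [show m^2 = m*m from sq m, Real.log_mul (ne_of_gt hm0') (ne_of_gt hm0')]
    ring
  have hlog : (m/(m-1)) * Real.log (γ/β) ≤ Real.log ((γ-1)/(β-1)) := by
    rw [Real.log_div (by linarith : γ - 1 ≠ 0) (by linarith : β - 1 ≠ 0),
        Real.log_div (ne_of_gt hγ0) (ne_of_gt hβ0)]
    have hrw : (m/(m-1)) * (Real.log γ - Real.log β) = c * (Real.log γ - Real.log m) := by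
      rw [hlogβ, hc]; ring
    linarith [hrw, hkey]
  have hpos : (0:ℝ) < (γ-1)/(β-1) := by
    apply div_pos <;> linarith
  rw [Real.rpow_def_of_pos (by positivity : (0:ℝ) < γ/β), ← Real.exp_log hpos]
  exact Real.exp_le_exp.mpr (by rw [mul_comm]; exact hlog)
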